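/- Every fixed point of a primitive substitution is linearly recurrent with some constant K, and more generally every primitive substitutive sequence (the image of such a fixed point under a letter-to-letter morphism) is linearly recurrent; consequently the minimal subshift generated by such a sequence is linearly recurrent. -/

import Mathlib

/-- Extension of a morphism `σ : A → A*` to words by concatenation. -/
def substWord {A : Type*} (σ : A → List A) (w : List A) : List A := w.flatMap σ

/-- `σⁿ(u)` : the `n`-th iterate of the morphism `σ` applied to the word `u`. -/
def wordIter {A : Type*} (σ : A → List A) (n : ℕ) (u : List A) : List A :=
  (substWord σ)^[n] u

/-- The prefix of length `n` of a one-sided sequence. -/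
def seqPrefix {A : Type*} (x : ℕ → A) (n : ℕ) : List A := (List.range n).map x

/-- The word `w` is a prefix of the sequence `x`. -/
def IsPrefixSeq {A : Type*} (w : List A) (x : ℕ → A) : Prop := w = seqPrefix x w.length

/-- `x` is a fixed point of `σ`, i.e. `σ(x) = x`: the image under `σ` of every prefix
of `x` is again a prefix of `x`. -/
def IsFixedPoint {A : Type*} (σ : A → List A) (x : ℕ → A) : Prop :=
  ∀ n, IsPrefixSeq (substWord σ (seqPrefix x n)) x

/-- `σ` is a substitution: some letter `a` is the first letter of `σ(a)`, and
`|σⁿ(b)| → ∞` for every letter `b`. -/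
def IsSubstitution {A : Type*} (σ : A → List A) : Prop :=
  (∃ a, (σ a).head? = some a) ∧
  ∀ b, Filter.Tendsto (fun n => (wordIter σ n [b]).length) Filter.atTop Filter.atTop

/-- `σ` is of constant length `p`. -/
def ConstantLength {A : Type*} (σ : A → List A) (p : ℕ) : Prop := ∀ a, (σ a).length = p
/-- The factor `x_{[i, i+n)}` of a sequence. -/
def factorAt {A : Type*} (x : ℕ → A) (i n : ℕ) : List A := (List.range n).map fun k => x (i + k)

/-- `i` is an occurrence of the word `u` in the sequence `x`. -/
def OccursAt {A : Type*} (x : ℕ → A) (u : List A) (i : ℕ) : Prop := factorAt x i u.length = u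

/-- `u` is a factor of `x`. -/
def IsFactor {A : Type*} (x : ℕ → A) (u : List A) : Prop := ∃ i, OccursAt x u i

/-- `u` occurs in `x` with bounded gaps (its set of occurrences is syndetic). -/
def BoundedGaps {A : Type*} (x : ℕ → A) (u : List A) : Prop :=
  ∃ g, 0 < g ∧ ∀ i, ∃ j, i ≤ j ∧ j < i + g ∧ OccursAt x u j

/-- `x` is uniformly recurrent: every factor occurs with bounded gaps. -/
def UniformlyRecurrent {A : Type*} (x : ℕ → A) : Prop :=
  ∀ u, IsFactor x u → BoundedGaps x u

/-- `w` is a return word to `u` in `x`: `w = x_{[j,k)}` for consecutive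
occurrences `j < k` of `u` in `x`. -/
def IsReturnWord {A : Type*} (x : ℕ → A) (u w : List A) : Prop :=
  ∃ j k, j < k ∧ OccursAt x u j ∧ OccursAt x u k ∧
    (∀ m, j < m → m < k → ¬ OccursAt x u m) ∧ w = factorAt x j (k - j)

/-- `x` is linearly recurrent with constant `K`: it is uniformly recurrent and every
return word `w` to every nonempty factor `u` satisfies `|w| ≤ K|u|`. -/
def LinearlyRecurrent {A : Type*} (x : ℕ → A) (K : ℕ) : Prop :=
  UniformlyRecurrent x ∧ ∀ u w, u ≠ [] → IsReturnWord x u w → w.length ≤ K * u.length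

/-- `x` is ultimately periodic. -/
def UltimatelyPeriodic {A : Type*} (x : ℕ → A) : Prop :=
  ∃ N t, 0 < t ∧ ∀ n, N ≤ n → x (n + t) = x n
/-- The language of a substitution: all words occurring as factors of some `σⁿ(b)`. -/
def Lang {A : Type*} (σ : A → List A) : Set (List A) := { w | ∃ n b, w <:+: wordIter σ n [b] }

/-- `σ` is primitive: for some `n`, every letter of `A` occurs in `σⁿ(b)` for every `b`. -/
def IsPrimitive {A : Type*} (σ : A → List A) : Prop :=
  ∃ n, ∀ a b : A, a ∈ wordIter σ n [b]

/-- The shift transformation on one-sided sequences. -/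
def shift {A : Type*} (x : ℕ → A) : ℕ → A := fun n => x (n + 1)

/-- The substitution subshift `X_σ`: sequences all of whose factors belong to `L(σ)`. -/
def Xsub {A : Type*} (σ : A → List A) : Set (ℕ → A) := { x | ∀ u, IsFactor x u → u ∈ Lang σ }

/-- The language of (the elements of) a subshift. -/
def LangOf {A : Type*} (X : Set (ℕ → A)) : Set (List A) := { w | ∃ x ∈ X, IsFactor x w }

/-- The subshift generated by `x`: all sequences whose factors are factors of `x`. -/
def Omega {A : Type*} (x : ℕ → A) : Set (ℕ → A) := { y | ∀ u, IsFactor y u → IsFactor x u }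

/-- The set of return words to `u` in the subshift `X`. -/
def ReturnWordsOf {A : Type*} (X : Set (ℕ → A)) (u : List A) : Set (List A) :=
  { w | ∃ x ∈ X, IsReturnWord x u w }


section Aux

open List Filter

variable {A C : Type*}

/-! ### Basic lemmas about `substWord`, `wordIter`, `seqPrefix`, `factorAt` -/

lemma substWord_nil (σ : A → List A) : substWord σ [] = [] := rfl

lemma substWord_append (σ : A → List A) (u v : List A) :
    substWord σ (u ++ v) = substWord σ u ++ substWord σ v := by simp [substWord]

lemma substWord_singleton (σ : A → List A) (a : A) : substWord σ [a] = σ a := by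
  simp [substWord]

lemma wordIter_zero (σ : A → List A) (u : List A) : wordIter σ 0 u = u := rfl

lemma wordIter_succ (σ : A → List A) (n : ℕ) (u : List A) :
    wordIter σ (n + 1) u = wordIter σ n (substWord σ u) :=
  Function.iterate_succ_apply _ _ _

lemma wordIter_succ' (σ : A → List A) (n : ℕ) (u : List A) :
    wordIter σ (n + 1) u = substWord σ (wordIter σ n u) :=
  Function.iterate_succ_apply' _ _ _

lemma wordIter_nil (σ : A → List A) (n : ℕ) : wordIter σ n [] = [] := by
  induction n with
  | zero => rfl
  | succ n ih => rw [wordIter_succ, substWord_nil, ih]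

lemma wordIter_append (σ : A → List A) (n : ℕ) (u v : List A) :
    wordIter σ n (u ++ v) = wordIter σ n u ++ wordIter σ n v := by
  induction n generalizing u v with
  | zero => rfl
  | succ n ih => rw [wordIter_succ, substWord_append, ih, wordIter_succ, wordIter_succ]

lemma wordIter_add (σ : A → List A) (m n : ℕ) (u : List A) :
    wordIter σ (m + n) u = wordIter σ m (wordIter σ n u) := by
  simpa [wordIter] using Function.iterate_add_apply (substWord σ) m n u

lemma wordIter_infix_of_mem (σ : A → List A) (n : ℕ) {a : A} {w : List A} (h : a ∈ w) :
    wordIter σ n [a] <:+: wordIter σ n w := by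
  obtain ⟨s, t, rfl⟩ := List.append_of_mem h
  refine ⟨wordIter σ n s, wordIter σ n t, ?_⟩
  rw [← wordIter_append, ← wordIter_append]
  congr 1
  simp

lemma seqPrefix_length (x : ℕ → A) (n : ℕ) : (seqPrefix x n).length = n := by
  simp [seqPrefix]

lemma factorAt_length (x : ℕ → A) (i n : ℕ) : (factorAt x i n).length = n := by
  simp [factorAt]

lemma seqPrefix_add (x : ℕ → A) (p l : ℕ) :
    seqPrefix x (p + l) = seqPrefix x p ++ factorAt x p l := by
  simp [seqPrefix, factorAt, List.range_add, Function.comp]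

lemma factorAt_add (x : ℕ → A) (p a b : ℕ) :
    factorAt x p (a + b) = factorAt x p a ++ factorAt x (p + a) b := by
  simp only [factorAt, List.range_add, List.map_append, List.map_map]
  congr 1
  apply List.map_congr_left
  intro k _
  simp [Function.comp, Nat.add_assoc]

lemma factorAt_zero_left (x : ℕ → A) (n : ℕ) : factorAt x 0 n = seqPrefix x n := by
  simp [factorAt, seqPrefix]

lemma occursAt_of_prefix_eq {x : ℕ → A} {p : ℕ} {w : List A}
    (h : seqPrefix x p ++ w = seqPrefix x (p + w.length)) : OccursAt x w p := by
  rw [seqPrefix_add] at h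
  exact (List.append_cancel_left h).symm

lemma occursAt_infix {x : ℕ → A} {v u : List A} {p : ℕ}
    (hv : OccursAt x v p) (huv : u <:+: v) :
    ∃ t, t + u.length ≤ v.length ∧ OccursAt x u (p + t) := by
  obtain ⟨s, e, rfl⟩ := huv
  refine ⟨s.length, by simp, ?_⟩
  unfold OccursAt at hv ⊢
  have hlen : (s ++ u ++ e).length = s.length + (u.length + e.length) := by simp
  rw [hlen, factorAt_add, factorAt_add] at hv
  rw [List.append_assoc] at hv
  have h1 := List.append_inj hv (by simp [factorAt_length])
  have h2 := List.append_inj h1.2 (by simp [factorAt_length])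
  exact h2.1

lemma window_infix {x : ℕ → A} {w : List A} {p i m : ℕ}
    (hw : OccursAt x w p) (hpi : p ≤ i) (him : i + m ≤ p + w.length) :
    factorAt x i m <:+: w := by
  unfold OccursAt at hw
  have h3 := factorAt_add x p (i - p) (m + (p + w.length - i - m))
  have h4 := factorAt_add x (p + (i - p)) m (p + w.length - i - m)
  rw [show p + (i - p) = i from by omega] at h3 h4
  have key : factorAt x p w.length
      = factorAt x p (i - p) ++ (factorAt x i m ++ factorAt x (i + m) (p + w.length - i - m)) := by
    calc factorAt x p w.length
        = factorAt x p ((i - p) + (m + (p + w.length - i - m))) := by congr 1; omega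
      _ = _ := by rw [h3, h4]
  exact ⟨factorAt x p (i - p), factorAt x (i + m) (p + w.length - i - m),
    by rw [List.append_assoc, ← key, hw]⟩

lemma factorAt_comp (φ : A → C) (x : ℕ → A) (i n : ℕ) :
    factorAt (φ ∘ x) i n = (factorAt x i n).map φ := by
  simp [factorAt]

lemma occursAt_comp {φ : A → C} {x : ℕ → A} {u : List A} {i : ℕ}
    (h : OccursAt x u i) : OccursAt (φ ∘ x) (u.map φ) i := by
  unfold OccursAt at h ⊢
  rw [List.length_map, factorAt_comp, h]

lemma factorAt_two (x : ℕ → A) (k : ℕ) : factorAt x k 2 = [x k, x (k + 1)] := by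
  simp [factorAt, List.range_succ]

end Aux


section Blocks

open List Filter

variable {A : Type*} {σ : A → List A} {y : ℕ → A}

lemma factorAt_one (x : ℕ → A) (k : ℕ) : factorAt x k 1 = [x k] := by
  simp [factorAt, List.range_succ]

lemma sigma_ne_nil (hσ : IsSubstitution σ) (b : A) : σ b ≠ [] := by
  intro hb
  have h0 : ∀ n, wordIter σ (n + 1) [b] = [] := by
    intro n
    rw [wordIter_succ, substWord_singleton, hb, wordIter_nil]
  obtain ⟨n, hn1, hn2⟩ := (((hσ.2 b).eventually_gt_atTop 0).and (Filter.eventually_ge_atTop 1)).exists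
  obtain ⟨n', rfl⟩ := Nat.exists_eq_add_of_le hn2
  rw [show 1 + n' = n' + 1 from by omega, h0] at hn1
  simp at hn1

lemma len_pos (hne : ∀ b, σ b ≠ []) (n : ℕ) (b : A) : 0 < (wordIter σ n [b]).length := by
  induction n generalizing b with
  | zero => simp [wordIter]
  | succ n ih =>
    rw [wordIter_succ, substWord_singleton]
    obtain ⟨c, l, hcl⟩ := List.exists_cons_of_ne_nil (hne b)
    rw [hcl, show c :: l = [c] ++ l from rfl, wordIter_append]
    have := ih c
    simp only [List.length_append]
    omega

lemma prefix_iter (hy : IsFixedPoint σ y) (n j : ℕ) :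
    ∃ L, wordIter σ n (seqPrefix y j) = seqPrefix y L := by
  induction n with
  | zero => exact ⟨j, rfl⟩
  | succ n ih =>
    obtain ⟨L, hL⟩ := ih
    rw [wordIter_succ', hL]
    exact ⟨_, hy L⟩

lemma occursAt_zero_of_eq_prefix {w : List A} {L : ℕ} (h : w = seqPrefix y L) :
    OccursAt y w 0 := by
  subst h
  unfold OccursAt
  rw [seqPrefix_length, factorAt_zero_left]

/-- Position of the `k`-th level-`n` block of the fixed point `y`. -/
def blockPos (σ : A → List A) (y : ℕ → A) (n k : ℕ) : ℕ :=
  (wordIter σ n (seqPrefix y k)).length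

lemma blockPos_zero (n : ℕ) : blockPos σ y n 0 = 0 := by
  simp [blockPos, seqPrefix, wordIter_nil]

lemma blockPos_succ (n k : ℕ) :
    blockPos σ y n (k + 1) = blockPos σ y n k + (wordIter σ n [y k]).length := by
  unfold blockPos
  rw [seqPrefix_add, factorAt_one, wordIter_append, List.length_append]

lemma occ_block (hy : IsFixedPoint σ y) (n k l : ℕ) :
    OccursAt y (wordIter σ n (factorAt y k l)) (blockPos σ y n k) := by
  obtain ⟨L, hL⟩ := prefix_iter hy n (k + l)
  obtain ⟨L', hL'⟩ := prefix_iter hy n k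
  have h1 : wordIter σ n (seqPrefix y (k + l))
      = wordIter σ n (seqPrefix y k) ++ wordIter σ n (factorAt y k l) := by
    rw [seqPrefix_add, wordIter_append]
  have hpos : blockPos σ y n k = L' := by
    unfold blockPos; rw [hL', seqPrefix_length]
  have hlen := congrArg List.length hL
  rw [h1, hL'] at hlen
  simp only [List.length_append, seqPrefix_length] at hlen
  rw [hpos]
  apply occursAt_of_prefix_eq
  rw [hlen, ← hL', ← h1]
  exact hL

lemma blockPos_lt (hne : ∀ b, σ b ≠ []) (n k : ℕ) :
    blockPos σ y n k < blockPos σ y n (k + 1) := by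
  rw [blockPos_succ]
  have := len_pos (σ := σ) hne n (y k)
  omega

lemma blockPos_mono (hne : ∀ b, σ b ≠ []) (n : ℕ) : StrictMono (blockPos σ y n) :=
  strictMono_nat_of_lt_succ fun k => blockPos_lt hne n k

lemma le_blockPos (hne : ∀ b, σ b ≠ []) (n k : ℕ) : k ≤ blockPos σ y n k := by
  induction k with
  | zero => simp [blockPos_zero]
  | succ k ih => have := blockPos_lt (y := y) hne n k; omega

lemma find_block (hne : ∀ b, σ b ≠ []) (n i : ℕ) :
    ∃ k, blockPos σ y n k ≤ i ∧ i < blockPos σ y n (k + 1) := by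
  have hex : ∃ k, i < blockPos σ y n (k + 1) :=
    ⟨i, lt_of_lt_of_le (Nat.lt_succ_self i) (le_blockPos hne n (i + 1))⟩
  classical
  refine ⟨Nat.find hex, ?_, Nat.find_spec hex⟩
  rcases Nat.eq_zero_or_pos (Nat.find hex) with h0 | h0
  · rw [h0, blockPos_zero]; exact Nat.zero_le i
  · obtain ⟨k', hk'⟩ := Nat.exists_eq_succ_of_ne_zero (Nat.pos_iff_ne_zero.mp h0)
    have hmin := Nat.find_min hex (m := k') (by omega)
    rw [hk', Nat.succ_eq_add_one]
    omega

lemma blockPos_add_le {n Mn : ℕ} (hM : ∀ b, (wordIter σ n [b]).length ≤ Mn)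
    (k c : ℕ) : blockPos σ y n (k + c) ≤ blockPos σ y n k + c * Mn := by
  induction c with
  | zero => simp
  | succ c ih =>
    rw [show k + (c + 1) = (k + c) + 1 from rfl, blockPos_succ, Nat.succ_mul]
    have := hM (y (k + c))
    omega

end Blocks


section Growth

open List Filter

variable {A : Type*} [Fintype A] {σ : A → List A} {y : ℕ → A}

/-- Maximal length of `σⁿ(b)` over all letters `b`. -/
def Mv (σ : A → List A) [Fintype A] (n : ℕ) : ℕ :=
  Finset.univ.sup fun b => (wordIter σ n [b]).length

lemma Mv_spec (n : ℕ) (b : A) : (wordIter σ n [b]).length ≤ Mv σ n :=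
  Finset.le_sup (f := fun b => (wordIter σ n [b]).length) (Finset.mem_univ b)

lemma Mv_pos [Nonempty A] (hne : ∀ b, σ b ≠ []) (n : ℕ) : 0 < Mv σ n := by
  obtain ⟨b⟩ := (inferInstance : Nonempty A)
  exact lt_of_lt_of_le (len_pos hne n b) (Mv_spec n b)

lemma len_word_le (n : ℕ) (w : List A) :
    (wordIter σ n w).length ≤ Mv σ n * w.length := by
  induction w with
  | nil => simp [wordIter_nil]
  | cons a w ih =>
    have h1 := Mv_spec (σ := σ) n a
    have h2 : wordIter σ n (a :: w) = wordIter σ n [a] ++ wordIter σ n w := by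
      rw [show a :: w = [a] ++ w from rfl, wordIter_append]
    rw [h2, List.length_append, List.length_cons, Nat.mul_succ]
    omega

lemma Mv_add_le (a b : ℕ) : Mv σ (a + b) ≤ Mv σ a * Mv σ b := by
  apply Finset.sup_le
  intro c _
  rw [wordIter_add]
  calc (wordIter σ a (wordIter σ b [c])).length
      ≤ Mv σ a * (wordIter σ b [c]).length := len_word_le a _
    _ ≤ Mv σ a * Mv σ b := Nat.mul_le_mul_left _ (Mv_spec b c)

lemma Mv_le_len_prim {n₀ : ℕ} (hp : ∀ a b : A, a ∈ wordIter σ n₀ [b]) (k : ℕ) (b : A) :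
    Mv σ k ≤ (wordIter σ (k + n₀) [b]).length := by
  apply Finset.sup_le
  intro c _
  rw [wordIter_add]
  exact (wordIter_infix_of_mem σ k (hp c b)).length_le

lemma grow (hσ : IsSubstitution σ) (m : ℕ) :
    ∃ n, ∀ b : A, m ≤ (wordIter σ n [b]).length := by
  have h : ∀ᶠ n in atTop, ∀ b : A, m ≤ (wordIter σ n [b]).length := by
    rw [Filter.eventually_all]
    intro b
    exact (hσ.2 b).eventually_ge_atTop m
  exact h.exists

lemma seqPrefix_one (x : ℕ → A) : seqPrefix x 1 = [x 0] := by
  simp [seqPrefix, List.range_succ]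

lemma factor_in_all (hσ : IsSubstitution σ) {n₀ : ℕ}
    (hp : ∀ a b : A, a ∈ wordIter σ n₀ [b]) (hy : IsFixedPoint σ y)
    {u : List A} (hu : IsFactor y u) :
    ∃ N, ∀ c, u <:+: wordIter σ N [c] := by
  obtain ⟨i, hi⟩ := hu
  obtain ⟨p, hpgrow⟩ := grow hσ (i + u.length)
  obtain ⟨L, hL⟩ := prefix_iter hy p 1
  have hLlen : L = (wordIter σ p (seqPrefix y 1)).length := by
    rw [hL, seqPrefix_length]
  have hLbig : i + u.length ≤ L := by
    rw [hLlen, seqPrefix_one]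
    exact hpgrow (y 0)
  have hocc : OccursAt y (wordIter σ p (seqPrefix y 1)) 0 := occursAt_zero_of_eq_prefix hL
  have hinf : u <:+: wordIter σ p (seqPrefix y 1) := by
    have := window_infix (m := u.length) hocc (Nat.zero_le i) (by omega)
    rwa [hi] at this
  refine ⟨p + n₀, fun c => ?_⟩
  rw [wordIter_add]
  refine hinf.trans ?_
  rw [seqPrefix_one]
  exact wordIter_infix_of_mem σ p (hp (y 0) c)

lemma infix_all_succ (hne : ∀ b, σ b ≠ []) {u : List A} {N : ℕ}
    (h : ∀ c, u <:+: wordIter σ N [c]) : ∀ c, u <:+: wordIter σ (N + 1) [c] := by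
  intro c
  rw [wordIter_succ, substWord_singleton]
  obtain ⟨d, l, hdl⟩ := List.exists_cons_of_ne_nil (hne c)
  refine (h d).trans ?_
  rw [hdl]
  exact wordIter_infix_of_mem σ N List.mem_cons_self

lemma infix_all_mono (hne : ∀ b, σ b ≠ []) {u : List A} {N N' : ℕ} (hNN : N ≤ N')
    (h : ∀ c, u <:+: wordIter σ N [c]) : ∀ c, u <:+: wordIter σ N' [c] := by
  induction N', hNN using Nat.le_induction with
  | base => exact h
  | succ N' _ ih => exact infix_all_succ hne ih

lemma pair_in_all (hσ : IsSubstitution σ) {n₀ : ℕ}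
    (hp : ∀ a b : A, a ∈ wordIter σ n₀ [b]) (hy : IsFixedPoint σ y) :
    ∃ N, ∀ k c, [y k, y (k + 1)] <:+: wordIter σ N [c] := by
  classical
  have hne := sigma_ne_nil hσ
  set f : A × A → ℕ := fun ab =>
    if h : ∃ N, ∀ c, [ab.1, ab.2] <:+: wordIter σ N [c] then h.choose else 0 with hf
  refine ⟨Finset.univ.sup f, fun k c => ?_⟩
  have hfac : IsFactor y [y k, y (k + 1)] := by
    refine ⟨k, ?_⟩
    unfold OccursAt
    rw [show ([y k, y (k + 1)] : List A).length = 2 from rfl, factorAt_two]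
  have hex : ∃ N, ∀ c, [y k, y (k + 1)] <:+: wordIter σ N [c] :=
    factor_in_all hσ hp hy hfac
  have hspec : ∀ c, [y k, y (k + 1)] <:+: wordIter σ (f (y k, y (k + 1))) [c] := by
    rw [hf]
    simp only [dif_pos hex]
    exact hex.choose_spec
  exact infix_all_mono hne (Finset.le_sup (Finset.mem_univ (y k, y (k + 1)))) hspec c

end Growth


section Synd

open List Filter

variable {A : Type*} [Fintype A]

/-- Main lemma: occurrences of every nonempty factor of a primitive substitution fixed
point are syndetic with gap linear in the length of the factor. -/
lemma linear_syndeticity {σ : A → List A} {y : ℕ → A}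
    (hσ : IsSubstitution σ) (hprim : IsPrimitive σ) (hy : IsFixedPoint σ y) :
    ∃ K, 0 < K ∧ ∀ u, IsFactor y u → u ≠ [] →
      ∃ g, 0 < g ∧ g ≤ K * u.length ∧
        ∀ i, ∃ j, i ≤ j ∧ j < i + g ∧ OccursAt y u j := by
  classical
  have : Nonempty A := ⟨y 0⟩
  obtain ⟨n₀, hp⟩ := hprim
  have hne := sigma_ne_nil hσ
  obtain ⟨Np, hNp⟩ := pair_in_all hσ hp hy
  set G := 2 * Mv σ Np + 2 with hG
  set R := (Finset.range (n₀ + 2)).sup (Mv σ) with hR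
  have hMpos : ∀ n, 0 < Mv σ n := Mv_pos hne
  have hR1 : 1 ≤ R := le_trans (hMpos 0) (Finset.le_sup (Finset.mem_range.mpr (by omega)))
  set Q := R * Mv σ (n₀ + 1) with hQ
  have hQ1 : 1 ≤ Q := Nat.one_le_iff_ne_zero.mpr
    (Nat.mul_ne_zero (by omega) (by have := hMpos (n₀ + 1); omega))
  refine ⟨(G + 3) * Q, by positivity, ?_⟩
  intro u hu hune
  have hm1 : 1 ≤ u.length := List.length_pos_iff.mpr hune
  -- minimal level n at which every letter image is at least as long as u
  have hgrow := grow (A := A) hσ u.length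
  set n := Nat.find hgrow with hn
  have hnspec : ∀ b, u.length ≤ (wordIter σ n [b]).length := Nat.find_spec hgrow
  -- bound Mv σ n ≤ Q * u.length
  have hMQ : Mv σ n ≤ Q * u.length := by
    rcases le_or_gt n (n₀ + 1) with hc | hc
    · have h1 : Mv σ n ≤ R := Finset.le_sup (Finset.mem_range.mpr (by omega))
      calc Mv σ n ≤ R := h1
        _ ≤ R * (Mv σ (n₀ + 1) * u.length) :=
            Nat.le_mul_of_pos_right _ (by have := hMpos (n₀ + 1); positivity)
        _ = Q * u.length := by rw [hQ]; ring
    · -- n ≥ n₀ + 2, use minimality at n - 1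
      have hmin : ¬ ∀ b : A, u.length ≤ (wordIter σ (n - 1) [b]).length :=
        Nat.find_min hgrow (by omega)
      push_neg at hmin
      obtain ⟨b, hb⟩ := hmin
      have h2 : Mv σ (n - n₀ - 1) ≤ (wordIter σ (n - 1) [b]).length := by
        have := Mv_le_len_prim hp (n - n₀ - 1) b
        rwa [show n - n₀ - 1 + n₀ = n - 1 from by omega] at this
      have h3 : Mv σ n ≤ Mv σ (n₀ + 1) * Mv σ (n - n₀ - 1) := by
        have := Mv_add_le (σ := σ) (n₀ + 1) (n - n₀ - 1)
        rwa [show n₀ + 1 + (n - n₀ - 1) = n from by omega] at this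
      calc Mv σ n ≤ Mv σ (n₀ + 1) * Mv σ (n - n₀ - 1) := h3
        _ ≤ Mv σ (n₀ + 1) * u.length := Nat.mul_le_mul_left _ (by omega)
        _ ≤ Q * u.length := Nat.mul_le_mul_right _ (by
            calc Mv σ (n₀ + 1) = 1 * Mv σ (n₀ + 1) := (Nat.one_mul _).symm
              _ ≤ R * Mv σ (n₀ + 1) := Nat.mul_le_mul_right _ hR1)
  refine ⟨(G + 3) * Mv σ n, by have := hMpos n; positivity, ?_, ?_⟩
  · exact le_trans (Nat.mul_le_mul_left _ hMQ) (le_of_eq (by ring))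
  -- locate an occurrence of u inside a level-n image of a two-letter factor of y
  obtain ⟨i₀, hi₀⟩ := hu
  obtain ⟨ks, hks1, hks2⟩ := find_block (y := y) hne n i₀
  have hblock2 : OccursAt y (wordIter σ n (factorAt y ks 2)) (blockPos σ y n ks) :=
    occ_block hy n ks 2
  have hsucc1 := blockPos_succ (σ := σ) (y := y) n ks
  have hsucc2 := blockPos_succ (σ := σ) (y := y) n (ks + 1)
  have hlen2 : (wordIter σ n (factorAt y ks 2)).length
      = (wordIter σ n [y ks]).length + (wordIter σ n [y (ks + 1)]).length := by
    rw [factorAt_two, show ([y ks, y (ks + 1)] : List A) = [y ks] ++ [y (ks + 1)] from rfl,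
      wordIter_append, List.length_append]
  have hufix : u <:+: wordIter σ n (factorAt y ks 2) := by
    have hwin := window_infix (i := i₀) (m := u.length) hblock2 (by omega) (by
      have := hnspec (y (ks + 1))
      omega)
    rwa [hi₀] at hwin
  -- syndeticity of the two-letter factor [y ks, y (ks+1)]
  have hpairsynd : ∀ k, ∃ q, k < q ∧ q < k + G ∧ factorAt y q 2 = factorAt y ks 2 := by
    intro k
    obtain ⟨mB, hm1, hm2⟩ := find_block (y := y) hne Np k
    have hoccB : OccursAt y (wordIter σ Np (factorAt y (mB + 1) 1)) (blockPos σ y Np (mB + 1)) :=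
      occ_block hy Np (mB + 1) 1
    rw [factorAt_one] at hoccB
    have hinf : factorAt y ks 2 <:+: wordIter σ Np [y (mB + 1)] := by
      rw [factorAt_two]; exact hNp ks (y (mB + 1))
    obtain ⟨t, ht1, ht2⟩ := occursAt_infix hoccB hinf
    rw [factorAt_length] at ht1
    refine ⟨blockPos σ y Np (mB + 1) + t, ?_, ?_, ht2⟩
    · omega
    · have hbs := blockPos_succ (σ := σ) (y := y) Np mB
      have hMB := Mv_spec (σ := σ) Np (y mB)
      have hMB1 := Mv_spec (σ := σ) Np (y (mB + 1))
      omega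
  -- conclude syndeticity of u
  intro i
  obtain ⟨Kb, hK1, hK2⟩ := find_block (y := y) hne n i
  obtain ⟨q, hq1, hq2, hq3⟩ := hpairsynd (Kb + 1)
  have hoccq : OccursAt y (wordIter σ n (factorAt y ks 2)) (blockPos σ y n q) := by
    have := occ_block hy n q 2
    rwa [hq3] at this
  obtain ⟨t, ht1, ht2⟩ := occursAt_infix hoccq hufix
  refine ⟨blockPos σ y n q + t, ?_, ?_, ht2⟩
  · have := (blockPos_mono (y := y) hne n).monotone (le_of_lt hq1)
    omega
  · have hq2' : q - (Kb + 1) ≤ G := by omega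
    have hbb := blockPos_add_le (σ := σ) (y := y) (n := n) (Mn := Mv σ n)
      (fun b => Mv_spec n b) (Kb + 1) (q - (Kb + 1))
    rw [show Kb + 1 + (q - (Kb + 1)) = q from by omega] at hbb
    have hmul : (q - (Kb + 1)) * Mv σ n ≤ G * Mv σ n := Nat.mul_le_mul_right _ hq2'
    have hsK := blockPos_succ (σ := σ) (y := y) n Kb
    have hMK := Mv_spec (σ := σ) n (y Kb)
    have hM1 := Mv_spec (σ := σ) n (y ks)
    have hM2 := Mv_spec (σ := σ) n (y (ks + 1))
    have hexp : (G + 3) * Mv σ n = G * Mv σ n + 3 * Mv σ n := by ring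
    omega

end Synd


section Assembly

open List

variable {A C : Type*}

lemma occursAt_nil (x : ℕ → A) (i : ℕ) : OccursAt x ([] : List A) i := rfl

/-- Linear syndeticity of factors transfers through a letter-to-letter morphism and
yields linear recurrence. -/
lemma LR_of_synd (y : ℕ → A) (φ : A → C) {K : ℕ} (hK : 0 < K)
    (h : ∀ u, IsFactor y u → u ≠ [] →
      ∃ g, 0 < g ∧ g ≤ K * u.length ∧
        ∀ i, ∃ j, i ≤ j ∧ j < i + g ∧ OccursAt y u j) :
    LinearlyRecurrent (φ ∘ y) K := by
  have hsynd' : ∀ u, IsFactor (φ ∘ y) u → u ≠ [] →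
      ∃ g, 0 < g ∧ g ≤ K * u.length ∧
        ∀ i, ∃ j, i ≤ j ∧ j < i + g ∧ OccursAt (φ ∘ y) u j := by
    intro u hu hune
    obtain ⟨i₀, hi₀⟩ := hu
    set v := factorAt y i₀ u.length with hv
    have hvmap : v.map φ = u := by rw [hv, ← factorAt_comp]; exact hi₀
    have hvlen : v.length = u.length := factorAt_length y i₀ u.length
    have hvne : v ≠ [] := by
      intro hcon
      rw [← hvmap, hcon] at hune
      exact hune rfl
    have hvfac : IsFactor y v := ⟨i₀, by unfold OccursAt; rw [hvlen]⟩
    obtain ⟨g, hg1, hg2, hg3⟩ := h v hvfac hvne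
    refine ⟨g, hg1, by rwa [hvlen] at hg2, fun i => ?_⟩
    obtain ⟨j, hj1, hj2, hj3⟩ := hg3 i
    exact ⟨j, hj1, hj2, by rw [← hvmap]; exact occursAt_comp hj3⟩
  constructor
  · intro u hu
    rcases eq_or_ne u [] with rfl | hune
    · exact ⟨1, by omega, fun i => ⟨i, le_refl i, by omega, occursAt_nil _ i⟩⟩
    · obtain ⟨g, hg1, _, hg3⟩ := hsynd' u hu hune
      exact ⟨g, hg1, hg3⟩
  · intro u w hune hw
    obtain ⟨j, k, hjk, hju, hku, hmin, hweq⟩ := hw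
    have hwlen : w.length = k - j := by rw [hweq, factorAt_length]
    obtain ⟨g, hg1, hg2, hg3⟩ := hsynd' u ⟨j, hju⟩ hune
    obtain ⟨j', hj'1, hj'2, hj'3⟩ := hg3 (j + 1)
    have hkj' : k ≤ j' := by
      by_contra hcon
      exact hmin j' (by omega) (by omega) hj'3
    omega

/-- The subshift generated by a uniformly recurrent sequence is minimal. -/
lemma omega_eq_of_UR {x : ℕ → A} (hUR : UniformlyRecurrent x) :
    ∀ z ∈ Omega x, Omega z = Omega x := by
  intro z hz
  have hfz : ∀ u, IsFactor x u → IsFactor z u := by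
    intro u hu
    obtain ⟨g, hg, hgap⟩ := hUR u hu
    set v := factorAt z 0 (g + u.length) with hvdef
    have hvz : OccursAt z v 0 := by unfold OccursAt; rw [hvdef, factorAt_length]
    obtain ⟨p, hp⟩ := hz v ⟨0, hvz⟩
    obtain ⟨j, hj1, hj2, hj3⟩ := hgap p
    have hvlen : v.length = g + u.length := factorAt_length z 0 _
    have hinf : u <:+: v := by
      have := window_infix (i := j) (m := u.length) hp hj1 (by omega)
      rwa [hj3] at this
    obtain ⟨t, _, ht⟩ := occursAt_infix hvz hinf
    exact ⟨0 + t, ht⟩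
  ext w
  constructor
  · intro hwz u hu
    exact hz u (hwz u hu)
  · intro hwx u hu
    exact hfz u (hwx u hu)

end Assembly

/-- **Linear recurrence of primitive substitutive sequences.** Every fixed point `y` of a
primitive substitution is linearly recurrent (with some constant `K`), and so is its image
`φ ∘ y` under any letter-to-letter morphism; consequently the subshift generated by `φ ∘ y`
is minimal and linearly recurrent (it contains a linearly recurrent sequence). -/
theorem primitive_substitutive_linearly_recurrent {A C : Type*} [Fintype A] [Fintype C]
    (σ : A → List A) (hσ : IsSubstitution σ) (hprim : IsPrimitive σ)
    (y : ℕ → A) (hy : IsFixedPoint σ y) (φ : A → C) :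
    (∃ K, LinearlyRecurrent y K) ∧
    (∃ K, LinearlyRecurrent (φ ∘ y) K) ∧
    (∀ z ∈ Omega (φ ∘ y), Omega z = Omega (φ ∘ y)) ∧
    (∃ K, ∃ z ∈ Omega (φ ∘ y), LinearlyRecurrent z K) := by
  obtain ⟨K, hK, hsynd⟩ := linear_syndeticity hσ hprim hy
  have h2 : LinearlyRecurrent (φ ∘ y) K := LR_of_synd y φ hK hsynd
  have h1 : LinearlyRecurrent y K := by
    have := LR_of_synd y id hK hsynd
    simpa [Function.id_comp] using this
  exact ⟨⟨K, h1⟩, ⟨K, h2⟩, omega_eq_of_UR h2.1, ⟨K, φ ∘ y, fun u hu => hu, h2⟩⟩
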